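/- For every 3-form φ on a 6-dimensional real vector space V, the dimension of ker φ = {v ∈ V : ι_v φ = 0} belongs to the set {0, 1, 3, 6}; in particular it is never 2, 4 or 5. -/
import Mathlib

open Module Submodule

namespace Stmt6Aux

variable {V : Type*} [AddCommGroup V] [Module ℝ V]

def ev1 (c : V) : (V [⋀^Fin 1]→ₗ[ℝ] ℝ) →ₗ[ℝ] ℝ where
  toFun f := f ![c]
  map_add' _ _ := rfl
  map_smul' _ _ := rfl

def ev0' : (V [⋀^Fin 0]→ₗ[ℝ] ℝ) →ₗ[ℝ] ℝ where
  toFun f := f ![]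
  map_add' _ _ := rfl
  map_smul' _ _ := rfl

def ev2 (b c : V) : (V [⋀^Fin 2]→ₗ[ℝ] ℝ) →ₗ[ℝ] ℝ where
  toFun f := f ![b, c]
  map_add' _ _ := rfl
  map_smul' _ _ := rfl

def L3a (φ : V [⋀^Fin 3]→ₗ[ℝ] ℝ) (b c : V) : V →ₗ[ℝ] ℝ := (ev2 b c).comp φ.curryLeft
def L3b (φ : V [⋀^Fin 3]→ₗ[ℝ] ℝ) (a c : V) : V →ₗ[ℝ] ℝ :=
  (ev1 c).comp (φ.curryLeft a).curryLeft
def L3c (φ : V [⋀^Fin 3]→ₗ[ℝ] ℝ) (a b : V) : V →ₗ[ℝ] ℝ :=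
  ev0'.comp ((φ.curryLeft a).curryLeft b).curryLeft

theorem swap01 (φ : V [⋀^Fin 3]→ₗ[ℝ] ℝ) (a b c : V) : φ ![a,b,c] = -φ ![b,a,c] := by
  have he : ![b,a,c] ∘ Equiv.swap (0:Fin 3) 1 = ![a,b,c] := by
    funext i; fin_cases i <;> simp [Equiv.swap_apply_def]
  have h := φ.map_swap (v := ![b,a,c]) (i := 0) (j := 1) (by decide)
  rw [he] at h; rw [h]

theorem swap12 (φ : V [⋀^Fin 3]→ₗ[ℝ] ℝ) (a b c : V) : φ ![a,b,c] = -φ ![a,c,b] := by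
  have he : ![a,c,b] ∘ Equiv.swap (1:Fin 3) 2 = ![a,b,c] := by
    funext i; fin_cases i <;> simp [Equiv.swap_apply_def]
  have h := φ.map_swap (v := ![a,c,b]) (i := 1) (j := 2) (by decide)
  rw [he] at h; rw [h]

theorem cyc (φ : V [⋀^Fin 3]→ₗ[ℝ] ℝ) (a b c : V) : φ ![a,b,c] = φ ![b,c,a] := by
  rw [swap01, swap12, neg_neg]

theorem rep12 (φ : V [⋀^Fin 3]→ₗ[ℝ] ℝ) (a b : V) : φ ![a,b,b] = 0 := by
  have := swap12 φ a b b; linarith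

theorem rep01 (φ : V [⋀^Fin 3]→ₗ[ℝ] ℝ) (a b : V) : φ ![a,a,b] = 0 := by
  have := swap01 φ a a b; linarith

theorem rep02 (φ : V [⋀^Fin 3]→ₗ[ℝ] ℝ) (a b : V) : φ ![a,b,a] = 0 := by
  rw [swap01, rep12, neg_zero]

theorem ker_front (φ : V [⋀^Fin 3]→ₗ[ℝ] ℝ) {v : V} (hv : φ.curryLeft v = 0) (a b : V) :
    φ ![v,a,b] = 0 := by
  show (φ.curryLeft v) ![a,b] = 0
  rw [hv]; rfl

theorem ker_mid (φ : V [⋀^Fin 3]→ₗ[ℝ] ℝ) {v : V} (hv : φ.curryLeft v = 0) (a b : V) :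
    φ ![a,v,b] = 0 := by
  rw [swap01, ker_front φ hv, neg_zero]

theorem ker_last (φ : V [⋀^Fin 3]→ₗ[ℝ] ℝ) {v : V} (hv : φ.curryLeft v = 0) (a b : V) :
    φ ![a,b,v] = 0 := by
  rw [cyc, ker_mid φ hv]

set_option maxHeartbeats 1000000 in
theorem strict_zero (φ : V [⋀^Fin 3]→ₗ[ℝ] ℝ) (e : Fin 4 → V)
    (h012 : φ ![e 0, e 1, e 2] = 0) (h013 : φ ![e 0, e 1, e 3] = 0)
    (h023 : φ ![e 0, e 2, e 3] = 0) (h123 : φ ![e 1, e 2, e 3] = 0) :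
    ∀ t : Fin 3 → Fin 4, StrictMono t → φ (e ∘ t) = 0 := by
  intro t hsm
  have h01 : t 0 < t 1 := hsm (by decide)
  have h12 : t 1 < t 2 := hsm (by decide)
  have heq : e ∘ t = ![e (t 0), e (t 1), e (t 2)] := by
    funext i; fin_cases i <;> rfl
  rw [heq]
  set i := t 0; set j := t 1; set k := t 2
  clear_value i j k
  clear heq hsm
  fin_cases i <;> fin_cases j <;> fin_cases k <;>
    first
      | exact absurd h01 (by decide)
      | exact absurd h12 (by decide)
      | exact h012
      | exact h013
      | exact h023
      | exact h123

theorem sorted_triples (φ : V [⋀^Fin 3]→ₗ[ℝ] ℝ) (e : Fin 4 → V)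
    (h : ∀ t : Fin 3 → Fin 4, StrictMono t → φ (e ∘ t) = 0) :
    ∀ t : Fin 3 → Fin 4, φ (e ∘ t) = 0 := by
  intro t
  by_cases ht : Function.Injective t
  · set σ := Tuple.sort t with hσ
    have hsm : StrictMono (t ∘ σ) :=
      (Tuple.monotone_sort t).strictMono_of_injective (ht.comp σ.injective)
    have h0 := h _ hsm
    have heq : e ∘ t = (e ∘ (t ∘ σ)) ∘ σ.symm := by funext i; simp
    rw [heq, AlternatingMap.map_perm, h0, smul_zero]
  · obtain ⟨i, j, hfe, hne⟩ := Function.not_injective_iff.1 ht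
    exact φ.map_eq_zero_of_eq (e ∘ t) (by simp [hfe]) hne

theorem front_ker (φ : V [⋀^Fin 3]→ₗ[ℝ] ℝ) {S : Set V} (hS : span ℝ S = ⊤) (w : V)
    (h : ∀ a ∈ S, ∀ b ∈ S, φ ![w, a, b] = 0) : φ.curryLeft w = 0 := by
  have memtop : ∀ x : V, x ∈ span ℝ S := fun x => by rw [hS]; trivial
  have hIn : ∀ a ∈ S, ∀ b : V, φ ![w, a, b] = 0 := by
    intro a ha b
    induction memtop b using span_induction with
    | mem x hx => exact h a ha x hx
    | zero => exact (L3c φ w a).map_zero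
    | add x y _ _ ihx ihy =>
        show L3c φ w a (x + y) = 0
        rw [map_add]; show φ ![w,a,x] + φ ![w,a,y] = 0; rw [ihx, ihy, add_zero]
    | smul r x _ ihx =>
        show L3c φ w a (r • x) = 0
        rw [map_smul]; show r • φ ![w,a,x] = 0; rw [ihx, smul_zero]
  have hAll : ∀ a b : V, φ ![w, a, b] = 0 := by
    intro a b
    induction memtop a using span_induction with
    | mem x hx => exact hIn x hx b
    | zero => exact (L3b φ w b).map_zero
    | add x y _ _ ihx ihy =>
        show L3b φ w b (x + y) = 0
        rw [map_add]; show φ ![w,x,b] + φ ![w,y,b] = 0; rw [ihx, ihy, add_zero]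
    | smul r x _ ihx =>
        show L3b φ w b (r • x) = 0
        rw [map_smul]; show r • φ ![w,x,b] = 0; rw [ihx, smul_zero]
  ext v
  have hv : v = ![v 0, v 1] := by funext i; fin_cases i <;> rfl
  rw [hv]
  exact hAll (v 0) (v 1)

/-- three vectors in a subspace of dimension at most two are linearly dependent, so any
alternating 3-form vanishes on them. -/
theorem dep_zero [FiniteDimensional ℝ V] (φ : V [⋀^Fin 3]→ₗ[ℝ] ℝ) (W : Submodule ℝ V)
    (hWle : finrank ℝ W ≤ 2) {s a b : V} (hs : s ∈ W) (ha : a ∈ W) (hb : b ∈ W) :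
    φ ![s, a, b] = 0 := by
  apply φ.map_linearDependent
  intro li
  have hli : LinearIndependent ℝ
      (fun i : Fin 3 => (⟨![s,a,b] i, by fin_cases i <;> assumption⟩ : W)) := by
    apply LinearIndependent.of_comp W.subtype
    exact li
  have := hli.fintype_card_le_finrank
  simp only [Fintype.card_fin] at this
  omega

end Stmt6Aux

open Stmt6Aux

set_option maxHeartbeats 1000000 in
/-- For every 3-form φ on a 6-dimensional real vector space V, the dimension of
ker φ = {v ∈ V : ι_v φ = 0} belongs to {0, 1, 3, 6}. -/
theorem stmt_6 {V : Type*} [AddCommGroup V] [Module ℝ V] [FiniteDimensional ℝ V]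
    (hdim : Module.finrank ℝ V = 6)
    (φ : V [⋀^Fin 3]→ₗ[ℝ] ℝ) :
    Module.finrank ℝ (LinearMap.ker φ.curryLeft) ∈ ({0, 1, 3, 6} : Set ℕ) := by
  set K : Submodule ℝ V := LinearMap.ker φ.curryLeft with hK
  have hk6 : finrank ℝ K ≤ 6 := hdim ▸ Submodule.finrank_le K
  have hKmem : ∀ v ∈ K, φ.curryLeft v = 0 := fun v hv => LinearMap.mem_ker.1 hv
  -- rule out dimensions 4 and 5
  have h45 : ¬(4 ≤ finrank ℝ K ∧ finrank ℝ K ≤ 5) := by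
    rintro ⟨h4, h5⟩
    obtain ⟨W, hW⟩ := Submodule.exists_isCompl K
    have hrw : finrank ℝ K + finrank ℝ W = 6 := by
      rw [Submodule.finrank_add_eq_of_isCompl hW, hdim]
    have hWle : finrank ℝ W ≤ 2 := by omega
    set S : Set V := (K : Set V) ∪ (W : Set V) with hSdef
    have hS : span ℝ S = ⊤ := by
      rw [hSdef, span_union, span_eq, span_eq]
      exact hW.sup_eq_top
    have hKtop : K = ⊤ := by
      rw [eq_top_iff, ← hS, span_le]
      intro s hs
      rcases hs with hsK | hsW
      · exact hsK
      · show s ∈ K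
        rw [hK, LinearMap.mem_ker]
        apply front_ker φ hS
        intro a ha b hb
        rcases ha with haK | haW
        · exact ker_mid φ (hKmem a haK) s b
        rcases hb with hbK | hbW
        · exact ker_last φ (hKmem b hbK) s a
        exact dep_zero φ W hWle hsW haW hbW
    rw [hKtop, finrank_top, hdim] at h5
    omega
  -- rule out dimension 2
  have h2 : finrank ℝ K ≠ 2 := by
    intro hk2
    obtain ⟨W, hW⟩ := Submodule.exists_isCompl K
    have hrw : finrank ℝ K + finrank ℝ W = 6 := by
      rw [Submodule.finrank_add_eq_of_isCompl hW, hdim]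
    have hWrank : finrank ℝ W = 4 := by omega
    let bW : Basis (Fin 4) ℝ W := finBasisOfFinrankEq ℝ W hWrank
    set e : Fin 4 → V := fun i => (bW i : V) with he
    have he_mem : ∀ i, e i ∈ W := fun i => (bW i).2
    have he_li : LinearIndependent ℝ e :=
      bW.linearIndependent.map' W.subtype (Submodule.ker_subtype W)
    have hspanW : span ℝ (Set.range e) = W := by
      have h1 : Set.range e = W.subtype '' Set.range bW := by
        rw [← Set.range_comp]; rfl
      rw [h1, span_image, bW.span_eq, Submodule.map_top, Submodule.range_subtype]
    set S : Set V := (K : Set V) ∪ Set.range e with hSdef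
    have hS : span ℝ S = ⊤ := by
      rw [hSdef, span_union, span_eq, hspanW]
      exact hW.sup_eq_top
    set c012 := φ ![e 0, e 1, e 2] with hc012
    set c013 := φ ![e 0, e 1, e 3] with hc013
    set c023 := φ ![e 0, e 2, e 3] with hc023
    set c123 := φ ![e 1, e 2, e 3] with hc123
    set w : V := c123 • e 0 - c023 • e 1 + c013 • e 2 - c012 • e 3 with hw
    -- values of φ on permuted basis triples
    have hv201 : φ ![e 2, e 0, e 1] = c012 := cyc φ _ _ _
    have hv301 : φ ![e 3, e 0, e 1] = c013 := cyc φ _ _ _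
    have hv102 : φ ![e 1, e 0, e 2] = -c012 := by rw [swap01]
    have hv302 : φ ![e 3, e 0, e 2] = c023 := cyc φ _ _ _
    have hv103 : φ ![e 1, e 0, e 3] = -c013 := by rw [swap01]
    have hv203 : φ ![e 2, e 0, e 3] = -c023 := by rw [cyc, swap12]
    have hv312 : φ ![e 3, e 1, e 2] = c123 := cyc φ _ _ _
    have hv213 : φ ![e 2, e 1, e 3] = -c123 := by rw [swap01]
    -- expansion of the first slot
    have hexp : ∀ a b : V, φ ![w, a, b] =
        c123 * φ ![e 0, a, b] - c023 * φ ![e 1, a, b]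
          + c013 * φ ![e 2, a, b] - c012 * φ ![e 3, a, b] := by
      intro a b
      show L3a φ a b w = _
      rw [hw, map_sub, map_add, map_sub, map_smul, map_smul, map_smul, map_smul]
      simp only [smul_eq_mul]
      rfl
    have hpairlt : ∀ i j : Fin 4, i < j → φ ![w, e i, e j] = 0 := by
      intro i j hij
      fin_cases i <;> fin_cases j <;>
        first
          | exact absurd hij (by decide)
          | (rw [hexp]
             simp only [Fin.zero_eta, Fin.mk_one, Fin.reduceFinMk,
               rep01 φ, rep02 φ, rep12 φ, hv201, hv301, hv102, hv302, hv103,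
               hv203, hv312, hv213, ← hc012, ← hc013, ← hc023, ← hc123]
             ring)
    have hpair : ∀ i j : Fin 4, φ ![w, e i, e j] = 0 := by
      intro i j
      rcases lt_trichotomy i j with h | h | h
      · exact hpairlt i j h
      · rw [h]; exact rep12 φ _ _
      · rw [swap12, hpairlt j i h, neg_zero]
    have hwK : w ∈ K := by
      rw [hK, LinearMap.mem_ker]
      apply front_ker φ hS
      intro a ha b hb
      rcases ha with haK | ⟨i, rfl⟩
      · exact ker_mid φ (hKmem a haK) w b
      rcases hb with hbK | ⟨j, rfl⟩
      · exact ker_last φ (hKmem b hbK) w (e i)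
      exact hpair i j
    have hwW : w ∈ W := by
      rw [hw]
      exact sub_mem (add_mem (sub_mem (smul_mem _ _ (he_mem 0)) (smul_mem _ _ (he_mem 1)))
        (smul_mem _ _ (he_mem 2))) (smul_mem _ _ (he_mem 3))
    have hw0 : w = 0 := (Submodule.disjoint_def.1 hW.disjoint) w hwK hwW
    -- coefficients vanish
    have hcoef : ∀ i, ![c123, -c023, c013, -c012] i = 0 := by
      apply Fintype.linearIndependent_iff.1 he_li
      rw [Fin.sum_univ_four]
      show c123 • e 0 + (-c023) • e 1 + c013 • e 2 + (-c012) • e 3 = 0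
      rw [neg_smul, neg_smul, ← hw0, hw]
      abel
    have hc012z : c012 = 0 := neg_eq_zero.1 (show -c012 = 0 from hcoef 3)
    have hc013z : c013 = 0 := hcoef 2
    have hc023z : c023 = 0 := neg_eq_zero.1 (show -c023 = 0 from hcoef 1)
    have hc123z : c123 = 0 := hcoef 0
    -- all triples of basis vectors vanish
    have hzero : ∀ i j k : Fin 4, φ ![e i, e j, e k] = 0 := by
      intro i j k
      have heq : ![e i, e j, e k] = e ∘ ![i, j, k] := by
        funext l; fin_cases l <;> rfl
      rw [heq]
      exact sorted_triples φ e (strict_zero φ e hc012z hc013z hc023z hc123z) ![i, j, k]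
    -- hence K = ⊤
    have hKtop : K = ⊤ := by
      rw [eq_top_iff, ← hS, span_le]
      intro s hs
      rcases hs with hsK | ⟨i, rfl⟩
      · exact hsK
      show e i ∈ K
      rw [hK, LinearMap.mem_ker]
      apply front_ker φ hS
      intro a ha b hb
      rcases ha with haK | ⟨j, rfl⟩
      · exact ker_mid φ (hKmem a haK) (e i) b
      rcases hb with hbK | ⟨l, rfl⟩
      · exact ker_last φ (hKmem b hbK) (e i) (e j)
      exact hzero i j l
    rw [hKtop, finrank_top, hdim] at hk2
    omega
  simp only [Set.mem_insert_iff, Set.mem_singleton_iff]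
  omega
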